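/- Let 𝒢 be a snake graph and let P_− and P_+ be its two perfect matchings consisting only of boundary edges. Then P_− and P_+ are disjoint and P_− ∪ P_+ is exactly the set of all boundary edges of 𝒢. -/

import Mathlib

/-!
Basic definitions: tiles, snake graphs, perfect matchings, sign functions.

A tile is a unit square in the plane, identified by the coordinates of its
south-west corner.  An edge of the integer grid is encoded as a pair
`(p, b) : (ℤ × ℤ) × Bool` where `b = true` means the horizontal edge from `p`
to `p + (1,0)` and `b = false` means the vertical edge from `p` to `p + (0,1)`.

A snake graph is a sequence of tiles `G_1, …, G_d` (`d ≥ 1`) in which each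
tile `G_{i+1}` is either the tile directly to the east or directly to the
north of `G_i`; this is exactly the combinatorial content of conditions
(i)–(iii) in the definition of a snake graph.  We record the position of the
first tile and the sequence of steps (`true` = east, `false` = north).
-/

abbrev Pt : Type := ℤ × ℤ

/-- An edge of the integer grid: `(p, true)` is the horizontal unit edge with left
endpoint `p`, and `(p, false)` is the vertical unit edge with bottom endpoint `p`. -/
abbrev Edge : Type := Pt × Bool

/-- The two endpoints of an edge. -/
def Edge.ends (e : Edge) : Finset Pt :=
  {e.1, e.1 + (if e.2 then ((1 : ℤ), (0 : ℤ)) else ((0 : ℤ), (1 : ℤ)))}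

/-- The south edge of the tile with south-west corner `p`. -/
def southEdge (p : Pt) : Edge := (p, true)
/-- The north edge of the tile with south-west corner `p`. -/
def northEdge (p : Pt) : Edge := (p + ((0 : ℤ), (1 : ℤ)), true)
/-- The west edge of the tile with south-west corner `p`. -/
def westEdge (p : Pt) : Edge := (p, false)
/-- The east edge of the tile with south-west corner `p`. -/
def eastEdge (p : Pt) : Edge := (p + ((1 : ℤ), (0 : ℤ)), false)

/-- The four edges of the tile with south-west corner `p`. -/
def tileEdges (p : Pt) : Finset Edge := {southEdge p, northEdge p, westEdge p, eastEdge p}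

/-- The four vertices of the tile with south-west corner `p`. -/
def tileVerts (p : Pt) : Finset Pt :=
  {p, p + ((1 : ℤ), (0 : ℤ)), p + ((0 : ℤ), (1 : ℤ)), p + ((1 : ℤ), (1 : ℤ))}

/-- A snake graph `𝒢 = (G_1, …, G_d)`, `d ≥ 1`: a sequence of tiles in which each
tile `G_{i+1}` shares exactly one edge with `G_i`, this edge being the north edge of
`G_i` and the south edge of `G_{i+1}`, or the east edge of `G_i` and the west edge of
`G_{i+1}`.  `step i = true` means `G_{i+1}` is east of `G_i`, `step i = false` means
`G_{i+1}` is north of `G_i`; only the values `step i` for `1 ≤ i ≤ d - 1` are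
relevant. -/
structure SnakeGraph where
  d : ℕ
  one_le_d : 1 ≤ d
  base : Pt
  step : ℕ → Bool

namespace SnakeGraph

/-- The south-west corner of the `i`-th tile, `1 ≤ i ≤ d`. -/
def pos (G : SnakeGraph) (i : ℕ) : Pt :=
  G.base + ∑ j ∈ Finset.Ico 1 i,
    (if G.step j then ((1 : ℤ), (0 : ℤ)) else ((0 : ℤ), (1 : ℤ)))

/-- The set of edges of the snake graph. -/
def edges (G : SnakeGraph) : Finset Edge :=
  (Finset.Icc 1 G.d).biUnion fun i => tileEdges (G.pos i)

/-- The set of vertices of the snake graph. -/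
def verts (G : SnakeGraph) : Finset Pt :=
  (Finset.Icc 1 G.d).biUnion fun i => tileVerts (G.pos i)

/-- The interior edge `e_i` shared by the tiles `G_i` and `G_{i+1}` (`1 ≤ i ≤ d-1`). -/
def intEdge (G : SnakeGraph) (i : ℕ) : Edge :=
  if G.step i then eastEdge (G.pos i) else northEdge (G.pos i)

/-- An edge is interior if it is one of the edges `e_1, …, e_{d-1}`. -/
def IsInteriorEdge (G : SnakeGraph) (e : Edge) : Prop :=
  ∃ i, 1 ≤ i ∧ i < G.d ∧ e = G.intEdge i

/-- A boundary edge is an edge of the snake graph which is not interior. -/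
def IsBoundaryEdge (G : SnakeGraph) (e : Edge) : Prop :=
  e ∈ G.edges ∧ ¬ G.IsInteriorEdge e

/-- A perfect matching of the snake graph: a set of edges of `G` such that every
vertex of `G` is incident to exactly one edge of the set. -/
def IsPerfectMatching (G : SnakeGraph) (P : Finset Edge) : Prop :=
  (∀ e ∈ P, e ∈ G.edges) ∧ ∀ v ∈ G.verts, ∃! e, e ∈ P ∧ v ∈ Edge.ends e

/-- A sign function on the snake graph: on every tile the north and west edges have
the same sign, the south and east edges have the same sign, and the signs of the
north and south edges are opposite.  (Signs are encoded as `Bool`.) -/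
def IsSignFunction (G : SnakeGraph) (f : Edge → Bool) : Prop :=
  ∀ i, 1 ≤ i → i ≤ G.d →
    f (northEdge (G.pos i)) = f (westEdge (G.pos i)) ∧
    f (southEdge (G.pos i)) = f (eastEdge (G.pos i)) ∧
    f (northEdge (G.pos i)) = ! f (southEdge (G.pos i))

end SnakeGraph
open SnakeGraph Finset

/-- A boundary perfect matching. -/
def BM (G : SnakeGraph) (P : Finset Edge) : Prop :=
  G.IsPerfectMatching P ∧ ∀ e ∈ P, G.IsBoundaryEdge e

lemma pos_one (G : SnakeGraph) : G.pos 1 = G.base := by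
  simp [SnakeGraph.pos]

lemma pos_succ (G : SnakeGraph) (i : ℕ) (h : 1 ≤ i) :
    G.pos (i+1) = G.pos i +
      (if G.step i then ((1:ℤ),(0:ℤ)) else ((0:ℤ),(1:ℤ))) := by
  unfold SnakeGraph.pos
  rw [Finset.sum_Ico_succ_top h, ← add_assoc]

lemma pos_sum (G : SnakeGraph) (i : ℕ) (h : 1 ≤ i) :
    (G.pos i).1 + (G.pos i).2 = G.base.1 + G.base.2 + (i : ℤ) - 1 := by
  induction i, h using Nat.le_induction with
  | base => simp [pos_one]
  | succ k hk ih =>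
    rw [pos_succ G k hk]
    rcases G.step k <;> simp at * <;> push_cast <;> omega

lemma pos_mono (G : SnakeGraph) (i j : ℕ) (h : 1 ≤ i) (hij : i ≤ j) :
    (G.pos i).1 ≤ (G.pos j).1 ∧ (G.pos i).2 ≤ (G.pos j).2 := by
  induction j, hij using Nat.le_induction with
  | base => omega
  | succ k hk ih =>
    rw [pos_succ G k (le_trans h hk)]
    rcases G.step k <;> simp <;> omega
/-! Local structure of a tile attached in direction `s`. -/

def dirv (s : Bool) : Pt := if s then ((1:ℤ),(0:ℤ)) else ((0:ℤ),(1:ℤ))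
def cdirv (s : Bool) : Pt := if s then ((0:ℤ),(1:ℤ)) else ((1:ℤ),(0:ℤ))

def eShared (q : Pt) (s : Bool) : Edge := if s then westEdge q else southEdge q
def eSide1 (q : Pt) (s : Bool) : Edge := if s then southEdge q else westEdge q
def eSide2 (q : Pt) (s : Bool) : Edge := if s then northEdge q else eastEdge q
def eFar (q : Pt) (s : Bool) : Edge := if s then eastEdge q else northEdge q

def vOld1 (q : Pt) : Pt := q
def vOld2 (q : Pt) (s : Bool) : Pt := q + cdirv s
def vNew1 (q : Pt) (s : Bool) : Pt := q + dirv s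
def vNew2 (q : Pt) : Pt := q + ((1:ℤ),(1:ℤ))

lemma mem_tileEdges (e : Edge) (r : Pt) :
    e ∈ tileEdges r ↔ e = southEdge r ∨ e = northEdge r ∨ e = westEdge r ∨ e = eastEdge r := by
  simp [tileEdges]

lemma mem_tileVerts (v r : Pt) :
    v ∈ tileVerts r ↔ v = r ∨ v = r + ((1:ℤ),(0:ℤ)) ∨ v = r + ((0:ℤ),(1:ℤ)) ∨ v = r + ((1:ℤ),(1:ℤ)) := by
  simp [tileVerts]

lemma mem_tileEdges' (e : Edge) (q : Pt) (s : Bool) :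
    e ∈ tileEdges q ↔ e = eShared q s ∨ e = eSide1 q s ∨ e = eSide2 q s ∨ e = eFar q s := by
  rcases s <;> simp [mem_tileEdges, eShared, eSide1, eSide2, eFar] <;> tauto

lemma mem_tileVerts' (v q : Pt) (s : Bool) :
    v ∈ tileVerts q ↔ v = vOld1 q ∨ v = vOld2 q s ∨ v = vNew1 q s ∨ v = vNew2 q := by
  rcases s <;> simp [mem_tileVerts, vOld1, vOld2, vNew1, vNew2, dirv, cdirv] <;> tauto

lemma ends_shared (q : Pt) (s : Bool) :
    (eShared q s).ends = {vOld1 q, vOld2 q s} := by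
  rcases s <;> simp [eShared, Edge.ends, westEdge, southEdge, vOld1, vOld2, cdirv]

lemma ends_side1 (q : Pt) (s : Bool) :
    (eSide1 q s).ends = {vOld1 q, vNew1 q s} := by
  rcases s <;> simp [eSide1, Edge.ends, westEdge, southEdge, vOld1, vNew1, dirv]

lemma ends_side2 (q : Pt) (s : Bool) :
    (eSide2 q s).ends = {vOld2 q s, vNew2 q} := by
  rcases s <;>
    norm_num [eSide2, Edge.ends, northEdge, eastEdge, vOld2, vNew2, cdirv, add_assoc,
      Prod.mk_add_mk]

lemma ends_far (q : Pt) (s : Bool) :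
    (eFar q s).ends = {vNew1 q s, vNew2 q} := by
  rcases s <;>
    norm_num [eFar, Edge.ends, northEdge, eastEdge, vNew1, vNew2, dirv, add_assoc,
      Prod.mk_add_mk]

lemma mem_ends (v : Pt) (e : Edge) (a b : Pt) (h : e.ends = {a, b}) :
    v ∈ e.ends ↔ v = a ∨ v = b := by rw [h]; simp

/- distinctness of the four vertices -/
lemma vdistinct (q : Pt) (s : Bool) :
    vOld1 q ≠ vOld2 q s ∧ vOld1 q ≠ vNew1 q s ∧ vOld1 q ≠ vNew2 q ∧
    vOld2 q s ≠ vNew1 q s ∧ vOld2 q s ≠ vNew2 q ∧ vNew1 q s ≠ vNew2 q := by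
  rcases s <;> simp [vOld1, vOld2, vNew1, vNew2, dirv, cdirv, Prod.ext_iff] <;> omega

/- distinctness of the four edges -/
lemma edistinct (q : Pt) (s : Bool) :
    eShared q s ≠ eSide1 q s ∧ eShared q s ≠ eSide2 q s ∧ eShared q s ≠ eFar q s ∧
    eSide1 q s ≠ eSide2 q s ∧ eSide1 q s ≠ eFar q s ∧ eSide2 q s ≠ eFar q s := by
  rcases s <;>
    simp [eShared, eSide1, eSide2, eFar, southEdge, northEdge, westEdge, eastEdge,
      Prod.ext_iff] <;> omega

lemma ends_subset (e : Edge) (r : Pt) (h : e ∈ tileEdges r) : e.ends ⊆ tileVerts r := by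
  rw [mem_tileEdges] at h
  rcases h with h | h | h | h <;> subst h <;>
    intro v hv <;>
    simp [Edge.ends, southEdge, northEdge, westEdge, eastEdge] at hv <;>
    rw [mem_tileVerts] <;>
    rcases hv with hv | hv <;> subst hv <;> simp [Prod.ext_iff] <;> omega
/-! Relation between a snake graph with `n+1` tiles and its first `n` tiles. -/

def SnakeGraph.prev (G : SnakeGraph) (n : ℕ) (hn : 1 ≤ n) : SnakeGraph :=
  ⟨n, hn, G.base, G.step⟩

section Prev

variable (G : SnakeGraph) (n : ℕ)

lemma prev_d (hn : 1 ≤ n) : (G.prev n hn).d = n := rfl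
lemma prev_pos (hn : 1 ≤ n) (i : ℕ) : (G.prev n hn).pos i = G.pos i := rfl
lemma prev_intEdge (hn : 1 ≤ n) (i : ℕ) : (G.prev n hn).intEdge i = G.intEdge i := rfl

lemma edges_split (hn : 1 ≤ n) (hd : G.d = n + 1) :
    G.edges = tileEdges (G.pos (n+1)) ∪ (G.prev n hn).edges := by
  unfold SnakeGraph.edges
  have h1 : Finset.Icc 1 G.d = insert (n+1) (Finset.Icc 1 n) := by
    rw [hd]; ext x; simp; omega
  rw [h1, Finset.biUnion_insert, prev_d]
  rfl

lemma verts_split (hn : 1 ≤ n) (hd : G.d = n + 1) :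
    G.verts = tileVerts (G.pos (n+1)) ∪ (G.prev n hn).verts := by
  unfold SnakeGraph.verts
  have h1 : Finset.Icc 1 G.d = insert (n+1) (Finset.Icc 1 n) := by
    rw [hd]; ext x; simp; omega
  rw [h1, Finset.biUnion_insert, prev_d]
  rfl

lemma vert_mem_bound (hn : 1 ≤ n) (v : Pt) (h : v ∈ (G.prev n hn).verts) :
    ∃ i, 1 ≤ i ∧ i ≤ n ∧ ∃ c : Pt,
      (c = ((0:ℤ),(0:ℤ)) ∨ c = ((1:ℤ),(0:ℤ)) ∨ c = ((0:ℤ),(1:ℤ)) ∨ c = ((1:ℤ),(1:ℤ))) ∧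
      v = G.pos i + c := by
  simp only [SnakeGraph.verts, Finset.mem_biUnion, Finset.mem_Icc, prev_d] at h
  obtain ⟨i, ⟨hi1, hin⟩, hv⟩ := h
  rw [prev_pos, mem_tileVerts] at hv
  refine ⟨i, hi1, hin, ?_⟩
  rcases hv with hv | hv | hv | hv
  · exact ⟨((0:ℤ),(0:ℤ)), (by tauto), (by rw [hv, Prod.mk_zero_zero, add_zero])⟩
  · exact ⟨((1:ℤ),(0:ℤ)), (by tauto), hv⟩
  · exact ⟨((0:ℤ),(1:ℤ)), (by tauto), hv⟩
  · exact ⟨((1:ℤ),(1:ℤ)), (by tauto), hv⟩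

lemma edge_mem_bound (hn : 1 ≤ n) (e : Edge) (h : e ∈ (G.prev n hn).edges) :
    ∃ i, 1 ≤ i ∧ i ≤ n ∧ ∃ c : Pt,
      ((c = ((0:ℤ),(0:ℤ)) ∨ c = ((0:ℤ),(1:ℤ))) ∧ e.2 = true ∨
       (c = ((0:ℤ),(0:ℤ)) ∨ c = ((1:ℤ),(0:ℤ))) ∧ e.2 = false) ∧
      e.1 = G.pos i + c := by
  simp only [SnakeGraph.edges, Finset.mem_biUnion, Finset.mem_Icc, prev_d] at h
  obtain ⟨i, ⟨hi1, hin⟩, he⟩ := h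
  rw [prev_pos, mem_tileEdges] at he
  refine ⟨i, hi1, hin, ?_⟩
  rcases he with he | he | he | he <;> subst he
  · exact ⟨((0:ℤ),(0:ℤ)), (by simp [southEdge]), (by simp [southEdge])⟩
  · exact ⟨((0:ℤ),(1:ℤ)), (by simp [northEdge]), (by simp [northEdge])⟩
  · exact ⟨((0:ℤ),(0:ℤ)), (by simp [westEdge]), (by simp [westEdge])⟩
  · exact ⟨((1:ℤ),(0:ℤ)), (by simp [eastEdge]), (by simp [eastEdge])⟩

lemma pos_succ' (hn : 1 ≤ n) : G.pos (n+1) = G.pos n + dirv (G.step n) := by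
  rw [pos_succ G n hn]; rfl

lemma new1_not_mem (hn : 1 ≤ n) : vNew1 (G.pos (n+1)) (G.step n) ∉ (G.prev n hn).verts := by
  intro h
  obtain ⟨i, hi1, hin, c, hc, hv⟩ := vert_mem_bound G n hn _ h
  have hs1 := pos_sum G i hi1
  have hsn := pos_sum G n hn
  obtain ⟨hm1, hm2⟩ := pos_mono G i n hi1 hin
  rw [vNew1, pos_succ' G n hn] at hv
  cases hst : G.step n <;> rw [hst] at hv <;>
    rcases hc with hc | hc | hc | hc <;> subst hc <;>
    simp [hst, dirv, Prod.ext_iff] at hv <;> omega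

lemma new2_not_mem (hn : 1 ≤ n) : vNew2 (G.pos (n+1)) ∉ (G.prev n hn).verts := by
  intro h
  obtain ⟨i, hi1, hin, c, hc, hv⟩ := vert_mem_bound G n hn _ h
  have hs1 := pos_sum G i hi1
  have hsn := pos_sum G n hn
  obtain ⟨hm1, hm2⟩ := pos_mono G i n hi1 hin
  rw [vNew2, pos_succ' G n hn] at hv
  cases hst : G.step n <;>
    rcases hc with hc | hc | hc | hc <;> subst hc <;>
    simp [hst, dirv, Prod.ext_iff] at hv <;> omega

lemma side1_not_mem (hn : 1 ≤ n) : eSide1 (G.pos (n+1)) (G.step n) ∉ (G.prev n hn).edges := by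
  intro h
  obtain ⟨i, hi1, hin, c, hc, hv⟩ := edge_mem_bound G n hn _ h
  have hs1 := pos_sum G i hi1
  have hsn := pos_sum G n hn
  obtain ⟨hm1, hm2⟩ := pos_mono G i n hi1 hin
  rw [pos_succ' G n hn] at hv
  cases hst : G.step n <;> rw [hst] at hv hc <;>
    simp [eSide1, southEdge, westEdge] at hv hc <;>
    rcases hc with hc | hc <;> subst hc <;>
    simp [hst, dirv, Prod.ext_iff] at hv <;> omega

lemma side2_not_mem (hn : 1 ≤ n) : eSide2 (G.pos (n+1)) (G.step n) ∉ (G.prev n hn).edges := by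
  intro h
  obtain ⟨i, hi1, hin, c, hc, hv⟩ := edge_mem_bound G n hn _ h
  have hs1 := pos_sum G i hi1
  have hsn := pos_sum G n hn
  obtain ⟨hm1, hm2⟩ := pos_mono G i n hi1 hin
  rw [pos_succ' G n hn] at hv
  cases hst : G.step n <;> rw [hst] at hv hc <;>
    simp [eSide2, northEdge, eastEdge] at hv hc <;>
    rcases hc with hc | hc <;> subst hc <;>
    simp [hst, dirv, Prod.ext_iff] at hv <;> omega

lemma far_not_mem (hn : 1 ≤ n) : eFar (G.pos (n+1)) (G.step n) ∉ (G.prev n hn).edges := by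
  intro h
  obtain ⟨i, hi1, hin, c, hc, hv⟩ := edge_mem_bound G n hn _ h
  have hs1 := pos_sum G i hi1
  have hsn := pos_sum G n hn
  obtain ⟨hm1, hm2⟩ := pos_mono G i n hi1 hin
  rw [pos_succ' G n hn] at hv
  cases hst : G.step n <;> rw [hst] at hv hc <;>
    simp [eFar, northEdge, eastEdge] at hv hc <;>
    rcases hc with hc | hc <;> subst hc <;>
    simp [hst, dirv, Prod.ext_iff] at hv <;> omega

lemma shared_mem (hn : 1 ≤ n) : eShared (G.pos (n+1)) (G.step n) ∈ (G.prev n hn).edges := by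
  have h1 : eShared (G.pos (n+1)) (G.step n) ∈ tileEdges (G.pos n) := by
    rw [pos_succ' G n hn, mem_tileEdges]
    cases hst : G.step n <;>
      simp [eShared, hst, dirv, westEdge, southEdge, northEdge, eastEdge]
  simp only [SnakeGraph.edges, Finset.mem_biUnion, prev_d]
  exact ⟨n, (by simp; omega), (by rw [prev_pos]; exact h1)⟩

lemma old1_mem (hn : 1 ≤ n) : vOld1 (G.pos (n+1)) ∈ (G.prev n hn).verts := by
  have h1 : vOld1 (G.pos (n+1)) ∈ tileVerts (G.pos n) := by
    rw [vOld1, pos_succ' G n hn, mem_tileVerts]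
    cases G.step n <;> simp [dirv]
  simp only [SnakeGraph.verts, Finset.mem_biUnion, prev_d]
  exact ⟨n, (by simp; omega), (by rw [prev_pos]; exact h1)⟩

lemma old2_mem (hn : 1 ≤ n) : vOld2 (G.pos (n+1)) (G.step n) ∈ (G.prev n hn).verts := by
  have h1 : vOld2 (G.pos (n+1)) (G.step n) ∈ tileVerts (G.pos n) := by
    rw [vOld2, pos_succ' G n hn, mem_tileVerts]
    cases G.step n <;>
      norm_num [dirv, cdirv, add_assoc, Prod.mk_add_mk]
  simp only [SnakeGraph.verts, Finset.mem_biUnion, prev_d]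
  exact ⟨n, (by simp; omega), (by rw [prev_pos]; exact h1)⟩

lemma intEdge_eq (i : ℕ) (hi : 1 ≤ i) :
    G.intEdge i = (G.pos (i+1), !G.step i) := by
  rw [SnakeGraph.intEdge, pos_succ G i hi]
  cases hst : G.step i <;> simp [hst, northEdge, eastEdge]

lemma shared_eq_intEdge (hn : 1 ≤ n) : eShared (G.pos (n+1)) (G.step n) = G.intEdge n := by
  rw [intEdge_eq G n hn]
  cases G.step n <;> simp [eShared, westEdge, southEdge]

lemma shared_not_int (hn : 1 ≤ n) :
    ¬ (G.prev n hn).IsInteriorEdge (eShared (G.pos (n+1)) (G.step n)) := by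
  rintro ⟨i, hi1, hin, he⟩
  rw [prev_d] at hin
  rw [prev_intEdge, intEdge_eq G i hi1, shared_eq_intEdge G n hn,
    intEdge_eq G n hn] at he
  have hpe : G.pos (n+1) = G.pos (i+1) := congrArg Prod.fst he
  have h1 := pos_sum G (i+1) (by omega)
  have h2 := pos_sum G (n+1) (by omega)
  rw [hpe] at h2
  have h3 : (i : ℤ) = n := by push_cast at h1 h2 ⊢; omega
  have : i = n := by exact_mod_cast h3
  omega

lemma interior_iff (hn : 1 ≤ n) (hd : G.d = n + 1) (e : Edge) :
    G.IsInteriorEdge e ↔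
      (G.prev n hn).IsInteriorEdge e ∨ e = eShared (G.pos (n+1)) (G.step n) := by
  constructor
  · rintro ⟨i, hi1, hin, he⟩
    rw [hd] at hin
    rcases Nat.lt_or_ge i n with h | h
    · exact Or.inl ⟨i, hi1, (by rw [prev_d]; omega), (by rw [prev_intEdge]; exact he)⟩
    · have hein : i = n := by omega
      subst hein
      exact Or.inr (by rw [he, shared_eq_intEdge G i hi1])
  · rintro (⟨i, hi1, hin, he⟩ | he)
    · rw [prev_d] at hin
      exact ⟨i, hi1, (by omega), (by rw [← prev_intEdge G n hn]; exact he)⟩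
    · exact ⟨n, hn, (by omega), (by rw [he, shared_eq_intEdge G n hn])⟩

lemma intEdge_mem_tile (i : ℕ) : G.intEdge i ∈ tileEdges (G.pos i) := by
  rw [SnakeGraph.intEdge, mem_tileEdges]
  cases G.step i <;> simp

lemma interior_mem_prev (hn : 1 ≤ n) (e : Edge) (h : (G.prev n hn).IsInteriorEdge e) :
    e ∈ (G.prev n hn).edges := by
  obtain ⟨i, hi1, hin, he⟩ := h
  rw [prev_d] at hin
  simp only [SnakeGraph.edges, Finset.mem_biUnion, prev_d]
  refine ⟨i, (by simp; omega), ?_⟩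
  rw [prev_pos, he, prev_intEdge]
  exact intEdge_mem_tile G i

lemma boundary_iff (hn : 1 ≤ n) (hd : G.d = n + 1) (e : Edge) :
    G.IsBoundaryEdge e ↔
      ((G.prev n hn).IsBoundaryEdge e ∧ e ≠ eShared (G.pos (n+1)) (G.step n)) ∨
      e = eSide1 (G.pos (n+1)) (G.step n) ∨ e = eSide2 (G.pos (n+1)) (G.step n) ∨
      e = eFar (G.pos (n+1)) (G.step n) := by
  obtain ⟨d1, d2, d3, d4, d5, d6⟩ := edistinct (G.pos (n+1)) (G.step n)
  constructor
  · rintro ⟨hmem, hint⟩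
    rw [edges_split G n hn hd, Finset.mem_union] at hmem
    rcases hmem with hmem | hmem
    · rw [mem_tileEdges' e _ (G.step n)] at hmem
      rcases hmem with he | he | he | he
      · exact absurd ((interior_iff G n hn hd e).2 (Or.inr he)) hint
      · exact Or.inr (Or.inl he)
      · exact Or.inr (Or.inr (Or.inl he))
      · exact Or.inr (Or.inr (Or.inr he))
    · left
      refine ⟨⟨hmem, fun h => hint ((interior_iff G n hn hd e).2 (Or.inl h))⟩, ?_⟩
      rintro rfl
      exact hint ((interior_iff G n hn hd _).2 (Or.inr rfl))
  · have hmemtile : ∀ f, f ∈ tileEdges (G.pos (n+1)) → f ∈ G.edges := by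
      intro f hf
      rw [edges_split G n hn hd]
      exact Finset.mem_union_left _ hf
    rintro (⟨⟨hmem, hint⟩, hne⟩ | he | he | he)
    · refine ⟨(by rw [edges_split G n hn hd]; exact Finset.mem_union_right _ hmem), ?_⟩
      intro h
      rcases (interior_iff G n hn hd e).1 h with h | h
      · exact hint h
      · exact hne h
    · subst he
      refine ⟨hmemtile _ ((mem_tileEdges' _ (G.pos (n+1)) (G.step n)).2
        (Or.inr (Or.inl rfl))), ?_⟩
      intro h
      rcases (interior_iff G n hn hd _).1 h with h | h
      · exact side1_not_mem G n hn (interior_mem_prev G n hn _ h)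
      · exact d1 h.symm
    · subst he
      refine ⟨hmemtile _ ((mem_tileEdges' _ (G.pos (n+1)) (G.step n)).2
        (Or.inr (Or.inr (Or.inl rfl)))), ?_⟩
      intro h
      rcases (interior_iff G n hn hd _).1 h with h | h
      · exact side2_not_mem G n hn (interior_mem_prev G n hn _ h)
      · exact d2 h.symm
    · subst he
      refine ⟨hmemtile _ ((mem_tileEdges' _ (G.pos (n+1)) (G.step n)).2
        (Or.inr (Or.inr (Or.inr rfl)))), ?_⟩
      intro h
      rcases (interior_iff G n hn hd _).1 h with h | h
      · exact far_not_mem G n hn (interior_mem_prev G n hn _ h)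
      · exact d3 h.symm

lemma ends_subset_verts (H : SnakeGraph) (e : Edge) (h : e ∈ H.edges) :
    e.ends ⊆ H.verts := by
  simp only [SnakeGraph.edges, Finset.mem_biUnion] at h
  obtain ⟨i, hi, he⟩ := h
  intro v hv
  simp only [SnakeGraph.verts, Finset.mem_biUnion]
  exact ⟨i, hi, ends_subset e _ he hv⟩

end Prev
/-! Membership in the ends of the four edges of a tile. -/

lemma mem_ends_shared (v q : Pt) (s : Bool) :
    v ∈ (eShared q s).ends ↔ v = vOld1 q ∨ v = vOld2 q s := by
  rw [ends_shared]; simp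

lemma mem_ends_side1 (v q : Pt) (s : Bool) :
    v ∈ (eSide1 q s).ends ↔ v = vOld1 q ∨ v = vNew1 q s := by
  rw [ends_side1]; simp

lemma mem_ends_side2 (v q : Pt) (s : Bool) :
    v ∈ (eSide2 q s).ends ↔ v = vOld2 q s ∨ v = vNew2 q := by
  rw [ends_side2]; simp

lemma mem_ends_far (v q : Pt) (s : Bool) :
    v ∈ (eFar q s).ends ↔ v = vNew1 q s ∨ v = vNew2 q := by
  rw [ends_far]; simp

/-! The base case: a snake graph with a single tile. -/

lemma key_base (G : SnakeGraph) (hd : G.d = 1) :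
    ∃ A B : Finset Edge, BM G A ∧ BM G B ∧ Disjoint A B ∧
      (∀ e, e ∈ A ∪ B ↔ G.IsBoundaryEdge e) ∧
      (∀ P, BM G P → P = A ∨ P = B) := by
  set q := G.pos 1 with hq
  set s := true with hs
  obtain ⟨v1, v2, v3, v4, v5, v6⟩ := vdistinct q s
  obtain ⟨d1, d2, d3, d4, d5, d6⟩ := edistinct q s
  have hedges : G.edges = tileEdges q := by
    unfold SnakeGraph.edges; rw [hd]; simp; rfl
  have hverts : G.verts = tileVerts q := by
    unfold SnakeGraph.verts; rw [hd]; simp; rfl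
  have hnoint : ∀ e, ¬ G.IsInteriorEdge e := by
    rintro e ⟨i, h1, h2, _⟩; rw [hd] at h2; omega
  have hbdry : ∀ e, G.IsBoundaryEdge e ↔ e ∈ tileEdges q := by
    intro e
    constructor
    · intro h; rw [← hedges]; exact h.1
    · intro h; exact ⟨(by rw [hedges]; exact h), hnoint e⟩
  refine ⟨{eShared q s, eFar q s}, {eSide1 q s, eSide2 q s}, ⟨⟨?_, ?_⟩, ?_⟩, ⟨⟨?_, ?_⟩, ?_⟩,
    ?_, ?_, ?_⟩
  · -- A ⊆ edges
    intro e he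
    rw [hedges, mem_tileEdges' _ q s]
    simp at he
    tauto
  · -- A covers
    intro v hv
    rw [hverts, mem_tileVerts' v q s] at hv
    rcases hv with hv | hv | hv | hv <;> subst hv
    · refine ⟨eShared q s, ⟨(by simp), (by rw [mem_ends_shared]; tauto)⟩, ?_⟩
      rintro f ⟨hf, hvf⟩
      simp at hf
      rcases hf with rfl | rfl
      · rfl
      · rw [mem_ends_far] at hvf; tauto
    · refine ⟨eShared q s, ⟨(by simp), (by rw [mem_ends_shared]; tauto)⟩, ?_⟩
      rintro f ⟨hf, hvf⟩
      simp at hf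
      rcases hf with rfl | rfl
      · rfl
      · rw [mem_ends_far] at hvf; tauto
    · refine ⟨eFar q s, ⟨(by simp), (by rw [mem_ends_far]; tauto)⟩, ?_⟩
      rintro f ⟨hf, hvf⟩
      simp at hf
      rcases hf with rfl | rfl
      · rw [mem_ends_shared] at hvf; tauto
      · rfl
    · refine ⟨eFar q s, ⟨(by simp), (by rw [mem_ends_far]; tauto)⟩, ?_⟩
      rintro f ⟨hf, hvf⟩
      simp at hf
      rcases hf with rfl | rfl
      · rw [mem_ends_shared] at hvf; tauto
      · rfl
  · -- A boundary
    intro e he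
    rw [hbdry, mem_tileEdges' _ q s]
    simp at he
    tauto
  · -- B ⊆ edges
    intro e he
    rw [hedges, mem_tileEdges' _ q s]
    simp at he
    tauto
  · -- B covers
    intro v hv
    rw [hverts, mem_tileVerts' v q s] at hv
    rcases hv with hv | hv | hv | hv <;> subst hv
    · refine ⟨eSide1 q s, ⟨(by simp), (by rw [mem_ends_side1]; tauto)⟩, ?_⟩
      rintro f ⟨hf, hvf⟩
      simp at hf
      rcases hf with rfl | rfl
      · rfl
      · rw [mem_ends_side2] at hvf; tauto
    · refine ⟨eSide2 q s, ⟨(by simp), (by rw [mem_ends_side2]; tauto)⟩, ?_⟩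
      rintro f ⟨hf, hvf⟩
      simp at hf
      rcases hf with rfl | rfl
      · rw [mem_ends_side1] at hvf; tauto
      · rfl
    · refine ⟨eSide1 q s, ⟨(by simp), (by rw [mem_ends_side1]; tauto)⟩, ?_⟩
      rintro f ⟨hf, hvf⟩
      simp at hf
      rcases hf with rfl | rfl
      · rfl
      · rw [mem_ends_side2] at hvf; tauto
    · refine ⟨eSide2 q s, ⟨(by simp), (by rw [mem_ends_side2]; tauto)⟩, ?_⟩
      rintro f ⟨hf, hvf⟩
      simp at hf
      rcases hf with rfl | rfl
      · rw [mem_ends_side1] at hvf; tauto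
      · rfl
  · -- B boundary
    intro e he
    rw [hbdry, mem_tileEdges' _ q s]
    simp at he
    tauto
  · -- disjoint
    rw [Finset.disjoint_left]
    intro e he he'
    simp at he he'
    rcases he with rfl | rfl <;> rcases he' with h | h
    · exact d1 h
    · exact d2 h
    · exact d5 h.symm
    · exact d6 h.symm
  · -- union
    intro e
    rw [hbdry, mem_tileEdges' _ q s]
    simp only [Finset.mem_union, Finset.mem_insert, Finset.mem_singleton]
    tauto
  · -- uniqueness
    intro P ⟨⟨hPsub, hPcov⟩, hPb⟩
    have hcand : ∀ e ∈ P, e = eShared q s ∨ e = eSide1 q s ∨ e = eSide2 q s ∨ e = eFar q s := by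
      intro e he
      rw [← mem_tileEdges' _ q s, ← hedges]
      exact hPsub e he
    have hn2 : vNew2 q ∈ G.verts := by
      rw [hverts, mem_tileVerts' _ q s]; exact Or.inr (Or.inr (Or.inr rfl))
    obtain ⟨e, ⟨heP, hve⟩, hu2⟩ := hPcov (vNew2 q) hn2
    have he2 : e = eSide2 q s ∨ e = eFar q s := by
      rcases hcand e heP with rfl | rfl | rfl | rfl
      · rw [mem_ends_shared] at hve
        rcases hve with h | h
        exacts [(v3 h.symm).elim, (v5 h.symm).elim]
      · rw [mem_ends_side1] at hve
        rcases hve with h | h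
        exacts [(v3 h.symm).elim, (v6 h.symm).elim]
      · exact Or.inl rfl
      · exact Or.inr rfl
    have ho1 : vOld1 q ∈ G.verts := by
      rw [hverts, mem_tileVerts' _ q s]; exact Or.inl rfl
    have hn1 : vNew1 q s ∈ G.verts := by
      rw [hverts, mem_tileVerts' _ q s]; exact Or.inr (Or.inr (Or.inl rfl))
    rcases he2 with rfl | rfl
    · -- side2 ∈ P, so P = B
      right
      have hfa : eFar q s ∉ P := by
        intro h
        have := hu2 (eFar q s) ⟨h, (by rw [mem_ends_far]; exact Or.inr rfl)⟩
        exact d6 this.symm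
      have hsh : eShared q s ∉ P := by
        intro h
        obtain ⟨f, ⟨hfP, hvf⟩, hu⟩ := hPcov (vOld2 q s)
          (by rw [hverts, mem_tileVerts' _ q s]; exact Or.inr (Or.inl rfl))
        have h1 := hu (eShared q s) ⟨h, (by rw [mem_ends_shared]; exact Or.inr rfl)⟩
        have h2 := hu (eSide2 q s) ⟨heP, (by rw [mem_ends_side2]; exact Or.inl rfl)⟩
        exact d2 (h1.trans h2.symm)
      have hs1 : eSide1 q s ∈ P := by
        obtain ⟨f, ⟨hfP, hvf⟩, hu⟩ := hPcov (vOld1 q) ho1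
        rcases hcand f hfP with rfl | rfl | rfl | rfl
        · exact absurd hfP hsh
        · exact hfP
        · rw [mem_ends_side2] at hvf
          rcases hvf with h | h
          exacts [(v1 h).elim, (v3 h).elim]
        · rw [mem_ends_far] at hvf
          rcases hvf with h | h
          exacts [(v2 h).elim, (v3 h).elim]
      ext f
      simp only [Finset.mem_insert, Finset.mem_singleton]
      constructor
      · intro hf
        rcases hcand f hf with rfl | rfl | rfl | rfl
        · exact absurd hf hsh
        · exact Or.inl rfl
        · exact Or.inr rfl
        · exact absurd hf hfa
      · rintro (rfl | rfl)
        · exact hs1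
        · exact heP
    · -- far ∈ P, so P = A
      left
      have hs2 : eSide2 q s ∉ P := by
        intro h
        have := hu2 (eSide2 q s) ⟨h, (by rw [mem_ends_side2]; exact Or.inr rfl)⟩
        exact d6 this
      have hs1 : eSide1 q s ∉ P := by
        intro h
        obtain ⟨f, ⟨hfP, hvf⟩, hu⟩ := hPcov (vNew1 q s) hn1
        have h1 := hu (eSide1 q s) ⟨h, (by rw [mem_ends_side1]; exact Or.inr rfl)⟩
        have h2 := hu (eFar q s) ⟨heP, (by rw [mem_ends_far]; exact Or.inl rfl)⟩
        exact d5 (h1.trans h2.symm)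
      have hsh : eShared q s ∈ P := by
        obtain ⟨f, ⟨hfP, hvf⟩, hu⟩ := hPcov (vOld1 q) ho1
        rcases hcand f hfP with rfl | rfl | rfl | rfl
        · exact hfP
        · exact absurd hfP hs1
        · rw [mem_ends_side2] at hvf
          rcases hvf with h | h
          exacts [(v1 h).elim, (v3 h).elim]
        · rw [mem_ends_far] at hvf
          rcases hvf with h | h
          exacts [(v2 h).elim, (v3 h).elim]
      ext f
      simp only [Finset.mem_insert, Finset.mem_singleton]
      constructor
      · intro hf
        rcases hcand f hf with rfl | rfl | rfl | rfl
        · exact Or.inl rfl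
        · exact absurd hf hs1
        · exact absurd hf hs2
        · exact Or.inr rfl
      · rintro (rfl | rfl)
        · exact hsh
        · exact heP
/-! The inductive step, stated abstractly. -/

attribute [irreducible] vOld1 vOld2 vNew1 vNew2 eShared eSide1 eSide2 eFar

lemma key_step (G G' : SnakeGraph) (q : Pt) (s : Bool)
    (hsplitE : G.edges = tileEdges q ∪ G'.edges)
    (hsplitV : G.verts = tileVerts q ∪ G'.verts)
    (hN1 : vNew1 q s ∉ G'.verts) (hN2 : vNew2 q ∉ G'.verts)
    (hS1 : eSide1 q s ∉ G'.edges) (hS2 : eSide2 q s ∉ G'.edges) (hF : eFar q s ∉ G'.edges)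
    (hShm : eShared q s ∈ G'.edges)
    (hShb' : ¬ G'.IsInteriorEdge (eShared q s))
    (hShint : G.IsInteriorEdge (eShared q s))
    (hO1 : vOld1 q ∈ G'.verts) (hO2 : vOld2 q s ∈ G'.verts)
    (hEnds : ∀ f ∈ G'.edges, Edge.ends f ⊆ G'.verts)
    (hbdry : ∀ e, G.IsBoundaryEdge e ↔
      (G'.IsBoundaryEdge e ∧ e ≠ eShared q s) ∨
      e = eSide1 q s ∨ e = eSide2 q s ∨ e = eFar q s)
    (A' B' : Finset Edge)
    (hA' : BM G' A') (hB' : BM G' B')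
    (hdisj : Disjoint A' B')
    (hunion : ∀ e, e ∈ A' ∪ B' ↔ G'.IsBoundaryEdge e)
    (huniq : ∀ P, BM G' P → P = A' ∨ P = B')
    (hshA : eShared q s ∈ A') :
    ∃ A B : Finset Edge, BM G A ∧ BM G B ∧ Disjoint A B ∧
      (∀ e, e ∈ A ∪ B ↔ G.IsBoundaryEdge e) ∧
      (∀ P, BM G P → P = A ∨ P = B) := by
  obtain ⟨v1, v2, v3, v4, v5, v6⟩ := vdistinct q s
  obtain ⟨d1, d2, d3, d4, d5, d6⟩ := edistinct q s
  obtain ⟨⟨hA'sub, hA'cov⟩, hA'b⟩ := hA'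
  obtain ⟨⟨hB'sub, hB'cov⟩, hB'b⟩ := hB'
  have hshB : eShared q s ∉ B' := Finset.disjoint_left.1 hdisj hshA
  set A : Finset Edge :=
    insert (eSide1 q s) (insert (eSide2 q s) (A'.erase (eShared q s))) with hA
  set B : Finset Edge := insert (eFar q s) B' with hB
  have hmemA : ∀ f, f ∈ A ↔
      f = eSide1 q s ∨ f = eSide2 q s ∨ (f ≠ eShared q s ∧ f ∈ A') := by
    intro f
    simp only [hA, Finset.mem_insert, Finset.mem_erase]
  have hmemB : ∀ f, f ∈ B ↔ f = eFar q s ∨ f ∈ B' := by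
    intro f
    simp only [hB, Finset.mem_insert]
  have htile : ∀ f, f ∈ tileEdges q → f ∈ G.edges := by
    intro f hf; rw [hsplitE]; exact Finset.mem_union_left _ hf
  have hGe : ∀ f, f ∈ G'.edges → f ∈ G.edges := by
    intro f hf; rw [hsplitE]; exact Finset.mem_union_right _ hf
  have hGv : ∀ v, v ∈ G'.verts → v ∈ G.verts := by
    intro v hv; rw [hsplitV]; exact Finset.mem_union_right _ hv
  have htv : ∀ v, v ∈ tileVerts q → v ∈ G.verts := by
    intro v hv; rw [hsplitV]; exact Finset.mem_union_left _ hv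
  have ho1G : vOld1 q ∈ G.verts := htv _ ((mem_tileVerts' _ q s).2 (Or.inl rfl))
  have ho2G : vOld2 q s ∈ G.verts := htv _ ((mem_tileVerts' _ q s).2 (Or.inr (Or.inl rfl)))
  have hn1G : vNew1 q s ∈ G.verts := htv _ ((mem_tileVerts' _ q s).2 (Or.inr (Or.inr (Or.inl rfl))))
  have hn2G : vNew2 q ∈ G.verts := htv _ ((mem_tileVerts' _ q s).2 (Or.inr (Or.inr (Or.inr rfl))))
  -- A is a boundary perfect matching of G
  have hBMA : BM G A := by
    refine ⟨⟨?_, ?_⟩, ?_⟩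
    · intro f hf
      rcases (hmemA f).1 hf with rfl | rfl | ⟨_, hfA⟩
      · exact htile _ ((mem_tileEdges' _ q s).2 (Or.inr (Or.inl rfl)))
      · exact htile _ ((mem_tileEdges' _ q s).2 (Or.inr (Or.inr (Or.inl rfl))))
      · exact hGe _ (hA'sub _ hfA)
    · intro v hv
      by_cases hvt : v ∈ tileVerts q
      · rw [mem_tileVerts' v q s] at hvt
        rcases hvt with hveq | hveq | hveq | hveq <;> subst hveq
        · -- v = old1
          refine ⟨eSide1 q s, ⟨(hmemA _).2 (Or.inl rfl),
            (mem_ends_side1 _ q s).2 (Or.inl rfl)⟩, ?_⟩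
          rintro f ⟨hf, hvf⟩
          rcases (hmemA f).1 hf with rfl | rfl | ⟨hfsh, hfA⟩
          · rfl
          · rw [mem_ends_side2] at hvf
            rcases hvf with h | h
            exacts [(v1 h).elim, (v3 h).elim]
          · obtain ⟨g, ⟨hgA, hvg⟩, hug⟩ := hA'cov (vOld1 q) hO1
            have h1 := hug f ⟨hfA, hvf⟩
            have h2 := hug (eShared q s) ⟨hshA, (mem_ends_shared _ q s).2 (Or.inl rfl)⟩
            exact (hfsh (h1.trans h2.symm)).elim
        · -- v = old2
          refine ⟨eSide2 q s, ⟨(hmemA _).2 (Or.inr (Or.inl rfl)),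
            (mem_ends_side2 _ q s).2 (Or.inl rfl)⟩, ?_⟩
          rintro f ⟨hf, hvf⟩
          rcases (hmemA f).1 hf with rfl | rfl | ⟨hfsh, hfA⟩
          · rw [mem_ends_side1] at hvf
            rcases hvf with h | h
            exacts [(v1 h.symm).elim, (v4 h).elim]
          · rfl
          · obtain ⟨g, ⟨hgA, hvg⟩, hug⟩ := hA'cov (vOld2 q s) hO2
            have h1 := hug f ⟨hfA, hvf⟩
            have h2 := hug (eShared q s) ⟨hshA, (mem_ends_shared _ q s).2 (Or.inr rfl)⟩
            exact (hfsh (h1.trans h2.symm)).elim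
        · -- v = new1
          refine ⟨eSide1 q s, ⟨(hmemA _).2 (Or.inl rfl),
            (mem_ends_side1 _ q s).2 (Or.inr rfl)⟩, ?_⟩
          rintro f ⟨hf, hvf⟩
          rcases (hmemA f).1 hf with rfl | rfl | ⟨hfsh, hfA⟩
          · rfl
          · rw [mem_ends_side2] at hvf
            rcases hvf with h | h
            exacts [(v4 h.symm).elim, (v6 h).elim]
          · exact (hN1 (hEnds f (hA'sub _ hfA) hvf)).elim
        · -- v = new2
          refine ⟨eSide2 q s, ⟨(hmemA _).2 (Or.inr (Or.inl rfl)),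
            (mem_ends_side2 _ q s).2 (Or.inr rfl)⟩, ?_⟩
          rintro f ⟨hf, hvf⟩
          rcases (hmemA f).1 hf with rfl | rfl | ⟨hfsh, hfA⟩
          · rw [mem_ends_side1] at hvf
            rcases hvf with h | h
            exacts [(v3 h.symm).elim, (v6 h.symm).elim]
          · rfl
          · exact (hN2 (hEnds f (hA'sub _ hfA) hvf)).elim
      · -- v an old vertex away from the shared edge
        have hv' : v ∈ G'.verts := by
          rw [hsplitV, Finset.mem_union] at hv
          exact hv.resolve_left hvt
        have hne1 : v ≠ vOld1 q := fun h => hvt ((mem_tileVerts' v q s).2 (Or.inl h))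
        have hne2 : v ≠ vOld2 q s := fun h => hvt ((mem_tileVerts' v q s).2 (Or.inr (Or.inl h)))
        obtain ⟨a, ⟨haA, hva⟩, hua⟩ := hA'cov v hv'
        have hash : a ≠ eShared q s := by
          rintro rfl
          rw [mem_ends_shared] at hva
          rcases hva with h | h
          exacts [hne1 h, hne2 h]
        refine ⟨a, ⟨(hmemA a).2 (Or.inr (Or.inr ⟨hash, haA⟩)), hva⟩, ?_⟩
        rintro f ⟨hf, hvf⟩
        rcases (hmemA f).1 hf with rfl | rfl | ⟨hfsh, hfA⟩
        · rw [mem_ends_side1] at hvf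
          rcases hvf with h | h
          exacts [(hne1 h).elim, (hN1 (h ▸ hv')).elim]
        · rw [mem_ends_side2] at hvf
          rcases hvf with h | h
          exacts [(hne2 h).elim, (hN2 (h ▸ hv')).elim]
        · exact hua f ⟨hfA, hvf⟩
    · intro f hf
      rcases (hmemA f).1 hf with rfl | rfl | ⟨hfsh, hfA⟩
      · exact (hbdry _).2 (Or.inr (Or.inl rfl))
      · exact (hbdry _).2 (Or.inr (Or.inr (Or.inl rfl)))
      · exact (hbdry f).2 (Or.inl ⟨hA'b f hfA, hfsh⟩)
  -- B is a boundary perfect matching of G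
  have hBMB : BM G B := by
    refine ⟨⟨?_, ?_⟩, ?_⟩
    · intro f hf
      rcases (hmemB f).1 hf with rfl | hfB
      · exact htile _ ((mem_tileEdges' _ q s).2 (Or.inr (Or.inr (Or.inr rfl))))
      · exact hGe _ (hB'sub _ hfB)
    · intro v hv
      by_cases hvG' : v ∈ G'.verts
      · obtain ⟨b, ⟨hbB, hvb⟩, hub⟩ := hB'cov v hvG'
        refine ⟨b, ⟨(hmemB b).2 (Or.inr hbB), hvb⟩, ?_⟩
        rintro f ⟨hf, hvf⟩
        rcases (hmemB f).1 hf with rfl | hfB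
        · rw [mem_ends_far] at hvf
          rcases hvf with h | h
          exacts [(hN1 (h ▸ hvG')).elim, (hN2 (h ▸ hvG')).elim]
        · exact hub f ⟨hfB, hvf⟩
      · have hvt : v ∈ tileVerts q := by
          rw [hsplitV, Finset.mem_union] at hv
          exact hv.resolve_right hvG'
        rw [mem_tileVerts' v q s] at hvt
        rcases hvt with hveq | hveq | hveq | hveq <;> subst hveq
        · exact absurd hO1 hvG'
        · exact absurd hO2 hvG'
        · refine ⟨eFar q s, ⟨(hmemB _).2 (Or.inl rfl),
            (mem_ends_far _ q s).2 (Or.inl rfl)⟩, ?_⟩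
          rintro f ⟨hf, hvf⟩
          rcases (hmemB f).1 hf with rfl | hfB
          · rfl
          · exact (hvG' (hEnds f (hB'sub _ hfB) hvf)).elim
        · refine ⟨eFar q s, ⟨(hmemB _).2 (Or.inl rfl),
            (mem_ends_far _ q s).2 (Or.inr rfl)⟩, ?_⟩
          rintro f ⟨hf, hvf⟩
          rcases (hmemB f).1 hf with rfl | hfB
          · rfl
          · exact (hvG' (hEnds f (hB'sub _ hfB) hvf)).elim
    · intro f hf
      rcases (hmemB f).1 hf with rfl | hfB
      · exact (hbdry _).2 (Or.inr (Or.inr (Or.inr rfl)))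
      · refine (hbdry f).2 (Or.inl ⟨hB'b f hfB, ?_⟩)
        rintro rfl
        exact hshB hfB
  -- Disjointness
  have hABdisj : Disjoint A B := by
    rw [Finset.disjoint_left]
    intro f hfA hfB
    rcases (hmemA f).1 hfA with h1 | h1 | ⟨hfsh, hfA'⟩ <;>
      rcases (hmemB f).1 hfB with h2 | h2
    · exact d5 (h1.symm.trans h2)
    · exact hS1 (by rw [← h1]; exact hB'sub _ h2)
    · exact d6 (h1.symm.trans h2)
    · exact hS2 (by rw [← h1]; exact hB'sub _ h2)
    · exact hF (by rw [← h2]; exact hA'sub _ hfA')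
    · exact Finset.disjoint_left.1 hdisj hfA' h2
  -- Union is the set of boundary edges
  have hABunion : ∀ e, e ∈ A ∪ B ↔ G.IsBoundaryEdge e := by
    intro e
    constructor
    · intro h
      rw [Finset.mem_union] at h
      rcases h with h | h
      · exact hBMA.2 e h
      · exact hBMB.2 e h
    · intro h
      rw [Finset.mem_union]
      rcases (hbdry e).1 h with ⟨hb, hne⟩ | rfl | rfl | rfl
      · rcases Finset.mem_union.1 ((hunion e).2 hb) with h' | h'
        · exact Or.inl ((hmemA e).2 (Or.inr (Or.inr ⟨hne, h'⟩)))
        · exact Or.inr ((hmemB e).2 (Or.inr h'))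
      · exact Or.inl ((hmemA _).2 (Or.inl rfl))
      · exact Or.inl ((hmemA _).2 (Or.inr (Or.inl rfl)))
      · exact Or.inr ((hmemB _).2 (Or.inl rfl))
  -- Uniqueness
  refine ⟨A, B, hBMA, hBMB, hABdisj, hABunion, ?_⟩
  intro P hP
  obtain ⟨⟨hPsub, hPcov⟩, hPb⟩ := hP
  have hshP : eShared q s ∉ P := fun h => (hPb _ h).2 hShint
  obtain ⟨e, ⟨heP, hve⟩, hu2⟩ := hPcov (vNew2 q) hn2G
  have hecand : e = eSide2 q s ∨ e = eFar q s := by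
    have heG := hPsub e heP
    rw [hsplitE, Finset.mem_union] at heG
    rcases heG with h | h
    · rw [mem_tileEdges' e q s] at h
      rcases h with rfl | rfl | rfl | rfl
      · rw [mem_ends_shared] at hve
        rcases hve with h | h
        exacts [(v3 h.symm).elim, (v5 h.symm).elim]
      · rw [mem_ends_side1] at hve
        rcases hve with h | h
        exacts [(v3 h.symm).elim, (v6 h.symm).elim]
      · exact Or.inl rfl
      · exact Or.inr rfl
    · exact absurd (hEnds e h hve) hN2
  rcases hecand with rfl | rfl
  · -- the side edges are in `P`, so `P = A`
    left
    have hfaP : eFar q s ∉ P := by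
      intro h
      exact d6 ((hu2 (eFar q s) ⟨h, (mem_ends_far _ q s).2 (Or.inr rfl)⟩).symm)
    have hs1P : eSide1 q s ∈ P := by
      obtain ⟨f, ⟨hfP, hvf⟩, hu1⟩ := hPcov (vNew1 q s) hn1G
      have hfc : f = eSide1 q s ∨ f = eFar q s := by
        have hfG := hPsub f hfP
        rw [hsplitE, Finset.mem_union] at hfG
        rcases hfG with h | h
        · rw [mem_tileEdges' f q s] at h
          rcases h with rfl | rfl | rfl | rfl
          · rw [mem_ends_shared] at hvf
            rcases hvf with h | h
            exacts [(v2 h.symm).elim, (v4 h.symm).elim]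
          · exact Or.inl rfl
          · rw [mem_ends_side2] at hvf
            rcases hvf with h | h
            exacts [(v4 h.symm).elim, (v6 h).elim]
          · exact Or.inr rfl
        · exact absurd (hEnds f h hvf) hN1
      rcases hfc with rfl | rfl
      · exact hfP
      · exact absurd hfP hfaP
    set P' : Finset Edge :=
      insert (eShared q s) ((P.erase (eSide1 q s)).erase (eSide2 q s)) with hP'
    have hmemP' : ∀ f, f ∈ P' ↔
        f = eShared q s ∨ (f ≠ eSide2 q s ∧ f ≠ eSide1 q s ∧ f ∈ P) := by
      intro f
      simp only [hP', Finset.mem_insert, Finset.mem_erase]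
    have hBMP' : BM G' P' := by
      refine ⟨⟨?_, ?_⟩, ?_⟩
      · intro f hf
        rcases (hmemP' f).1 hf with rfl | ⟨hf2, hf1, hfP⟩
        · exact hShm
        · have := hPsub f hfP
          rw [hsplitE, Finset.mem_union] at this
          rcases this with h | h
          · rw [mem_tileEdges' f q s] at h
            rcases h with rfl | rfl | rfl | rfl
            · exact absurd hfP hshP
            · exact absurd rfl hf1
            · exact absurd rfl hf2
            · exact absurd hfP hfaP
          · exact h
      · intro v hv'
        by_cases h1 : v = vOld1 q
        · subst h1
          refine ⟨eShared q s, ⟨(hmemP' _).2 (Or.inl rfl),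
            (mem_ends_shared _ q s).2 (Or.inl rfl)⟩, ?_⟩
          rintro f ⟨hf, hvf⟩
          rcases (hmemP' f).1 hf with rfl | ⟨hf2, hf1, hfP⟩
          · rfl
          · obtain ⟨g, ⟨hgP, hvg⟩, hug⟩ := hPcov (vOld1 q) ho1G
            have ha := hug f ⟨hfP, hvf⟩
            have hb := hug (eSide1 q s) ⟨hs1P, (mem_ends_side1 _ q s).2 (Or.inl rfl)⟩
            exact (hf1 (ha.trans hb.symm)).elim
        · by_cases h2 : v = vOld2 q s
          · subst h2
            refine ⟨eShared q s, ⟨(hmemP' _).2 (Or.inl rfl),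
              (mem_ends_shared _ q s).2 (Or.inr rfl)⟩, ?_⟩
            rintro f ⟨hf, hvf⟩
            rcases (hmemP' f).1 hf with rfl | ⟨hf2, hf1, hfP⟩
            · rfl
            · obtain ⟨g, ⟨hgP, hvg⟩, hug⟩ := hPcov (vOld2 q s) ho2G
              have ha := hug f ⟨hfP, hvf⟩
              have hb := hug (eSide2 q s) ⟨heP, (mem_ends_side2 _ q s).2 (Or.inl rfl)⟩
              exact (hf2 (ha.trans hb.symm)).elim
          · obtain ⟨g, ⟨hgP, hvg⟩, hug⟩ := hPcov v (hGv v hv')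
            have hg1 : g ≠ eSide1 q s := by
              rintro rfl
              rw [mem_ends_side1] at hvg
              rcases hvg with h | h
              exacts [h1 h, hN1 (h ▸ hv')]
            have hg2 : g ≠ eSide2 q s := by
              rintro rfl
              rw [mem_ends_side2] at hvg
              rcases hvg with h | h
              exacts [h2 h, hN2 (h ▸ hv')]
            refine ⟨g, ⟨(hmemP' g).2 (Or.inr ⟨hg2, hg1, hgP⟩), hvg⟩, ?_⟩
            rintro f ⟨hf, hvf⟩
            rcases (hmemP' f).1 hf with rfl | ⟨hf2, hf1, hfP⟩
            · rw [mem_ends_shared] at hvf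
              rcases hvf with h | h
              exacts [(h1 h).elim, (h2 h).elim]
            · exact hug f ⟨hfP, hvf⟩
      · intro f hf
        rcases (hmemP' f).1 hf with rfl | ⟨hf2, hf1, hfP⟩
        · exact ⟨hShm, hShb'⟩
        · rcases (hbdry f).1 (hPb f hfP) with ⟨hb, _⟩ | rfl | rfl | rfl
          · exact hb
          · exact absurd rfl hf1
          · exact absurd rfl hf2
          · exact absurd hfP hfaP
    have hP'A : P' = A' := by
      rcases huniq P' hBMP' with h | h
      · exact h
      · exact absurd (h ▸ (hmemP' _).2 (Or.inl rfl)) hshB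
    have hsh_not : eShared q s ∉ (P.erase (eSide1 q s)).erase (eSide2 q s) := by
      intro h
      exact hshP (Finset.mem_of_mem_erase (Finset.mem_of_mem_erase h))
    have e1 : A'.erase (eShared q s) = (P.erase (eSide1 q s)).erase (eSide2 q s) := by
      rw [← hP'A, hP', Finset.erase_insert hsh_not]
    have e2 : insert (eSide2 q s) ((P.erase (eSide1 q s)).erase (eSide2 q s))
        = P.erase (eSide1 q s) :=
      Finset.insert_erase (Finset.mem_erase.2 ⟨Ne.symm d4, heP⟩)
    rw [hA, e1, e2, Finset.insert_erase hs1P]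
  · -- the far edge is in `P`, so `P = B`
    right
    have hs2P : eSide2 q s ∉ P := by
      intro h
      exact d6 (hu2 (eSide2 q s) ⟨h, (mem_ends_side2 _ q s).2 (Or.inr rfl)⟩)
    have hs1P : eSide1 q s ∉ P := by
      intro h
      obtain ⟨f, ⟨hfP, hvf⟩, hu1⟩ := hPcov (vNew1 q s) hn1G
      have ha := hu1 (eSide1 q s) ⟨h, (mem_ends_side1 _ q s).2 (Or.inr rfl)⟩
      have hb := hu1 (eFar q s) ⟨heP, (mem_ends_far _ q s).2 (Or.inl rfl)⟩
      exact d5 (ha.trans hb.symm)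
    set P' : Finset Edge := P.erase (eFar q s) with hP'
    have hmemP' : ∀ f, f ∈ P' ↔ f ≠ eFar q s ∧ f ∈ P := by
      intro f
      simp only [hP', Finset.mem_erase]
    have hBMP' : BM G' P' := by
      refine ⟨⟨?_, ?_⟩, ?_⟩
      · intro f hf
        obtain ⟨hffa, hfP⟩ := (hmemP' f).1 hf
        have := hPsub f hfP
        rw [hsplitE, Finset.mem_union] at this
        rcases this with h | h
        · rw [mem_tileEdges' f q s] at h
          rcases h with rfl | rfl | rfl | rfl
          · exact absurd hfP hshP
          · exact absurd hfP hs1P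
          · exact absurd hfP hs2P
          · exact absurd rfl hffa
        · exact h
      · intro v hv'
        obtain ⟨g, ⟨hgP, hvg⟩, hug⟩ := hPcov v (hGv v hv')
        have hgfa : g ≠ eFar q s := by
          rintro rfl
          rw [mem_ends_far] at hvg
          rcases hvg with h | h
          exacts [hN1 (h ▸ hv'), hN2 (h ▸ hv')]
        refine ⟨g, ⟨(hmemP' g).2 ⟨hgfa, hgP⟩, hvg⟩, ?_⟩
        rintro f ⟨hf, hvf⟩
        exact hug f ⟨((hmemP' f).1 hf).2, hvf⟩
      · intro f hf
        obtain ⟨hffa, hfP⟩ := (hmemP' f).1 hf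
        rcases (hbdry f).1 (hPb f hfP) with ⟨hb, _⟩ | rfl | rfl | rfl
        · exact hb
        · exact absurd hfP hs1P
        · exact absurd hfP hs2P
        · exact absurd rfl hffa
    have hP'B : P' = B' := by
      rcases huniq P' hBMP' with h | h
      · exfalso
        apply hshP
        have : eShared q s ∈ P' := h ▸ hshA
        exact ((hmemP' _).1 this).2
      · exact h
    rw [hB, ← hP'B, hP', Finset.insert_erase heP]
/-! Assembling the induction. -/

lemma key : ∀ (m : ℕ) (G : SnakeGraph), G.d = m →
    ∃ A B : Finset Edge, BM G A ∧ BM G B ∧ Disjoint A B ∧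
      (∀ e, e ∈ A ∪ B ↔ G.IsBoundaryEdge e) ∧
      (∀ P, BM G P → P = A ∨ P = B) := by
  intro m
  induction m with
  | zero =>
    intro G hG
    have := G.one_le_d
    omega
  | succ n ih =>
    intro G hd
    rcases Nat.eq_zero_or_pos n with rfl | hn
    · exact key_base G hd
    · obtain ⟨A', B', hA', hB', hdisj, hunion, huniq⟩ := ih (G.prev n hn) (prev_d G n hn)
      have hshb : (G.prev n hn).IsBoundaryEdge (eShared (G.pos (n+1)) (G.step n)) :=
        ⟨shared_mem G n hn, shared_not_int G n hn⟩
      have hShint : G.IsInteriorEdge (eShared (G.pos (n+1)) (G.step n)) :=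
        (interior_iff G n hn hd _).2 (Or.inr rfl)
      have hsh : eShared (G.pos (n+1)) (G.step n) ∈ A' ∪ B' := (hunion _).2 hshb
      rw [Finset.mem_union] at hsh
      rcases hsh with h | h
      · exact key_step G (G.prev n hn) (G.pos (n+1)) (G.step n)
          (edges_split G n hn hd) (verts_split G n hn hd)
          (new1_not_mem G n hn) (new2_not_mem G n hn)
          (side1_not_mem G n hn) (side2_not_mem G n hn) (far_not_mem G n hn)
          (shared_mem G n hn) (shared_not_int G n hn) hShint
          (old1_mem G n hn) (old2_mem G n hn)
          (fun f hf => ends_subset_verts (G.prev n hn) f hf)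
          (boundary_iff G n hn hd)
          A' B' hA' hB' hdisj hunion huniq h
      · exact key_step G (G.prev n hn) (G.pos (n+1)) (G.step n)
          (edges_split G n hn hd) (verts_split G n hn hd)
          (new1_not_mem G n hn) (new2_not_mem G n hn)
          (side1_not_mem G n hn) (side2_not_mem G n hn) (far_not_mem G n hn)
          (shared_mem G n hn) (shared_not_int G n hn) hShint
          (old1_mem G n hn) (old2_mem G n hn)
          (fun f hf => ends_subset_verts (G.prev n hn) f hf)
          (boundary_iff G n hn hd)
          B' A' hB' hA' hdisj.symm
          (fun e => by rw [Finset.union_comm]; exact hunion e)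
          (fun P hP => Or.symm (huniq P hP)) h
/-- Let `𝒢` be a snake graph and `P₋`, `P₊` its two perfect
matchings consisting only of boundary edges.  Then `P₋` and `P₊` are disjoint and
`P₋ ∪ P₊` is exactly the set of all boundary edges of `𝒢`. -/
theorem boundary_matchings_partition_boundary (G : SnakeGraph)
    (Pminus Pplus : Finset Edge)
    (hm : G.IsPerfectMatching Pminus) (hmb : ∀ e ∈ Pminus, G.IsBoundaryEdge e)
    (hp : G.IsPerfectMatching Pplus) (hpb : ∀ e ∈ Pplus, G.IsBoundaryEdge e)
    (hne : Pminus ≠ Pplus) :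
    Disjoint Pminus Pplus ∧ ∀ e : Edge, e ∈ Pminus ∪ Pplus ↔ G.IsBoundaryEdge e := by
  obtain ⟨A, B, hA, hB, hdisj, hunion, huniq⟩ := key G.d G rfl
  rcases huniq Pminus ⟨hm, hmb⟩ with rfl | rfl <;>
    rcases huniq Pplus ⟨hp, hpb⟩ with rfl | rfl
  · exact absurd rfl hne
  · exact ⟨hdisj, hunion⟩
  · exact ⟨hdisj.symm, fun e => by rw [Finset.union_comm]; exact hunion e⟩
  · exact absurd rfl hne
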